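/- Let 𝒳 ⊆ ℝ and 𝒮 ⊆ ℝ be finite, with min over distinct s, s' ∈ 𝒮 of |s − s'| ≥ 2 · max over x, x' ∈ 𝒳 of |x − x'|. Then for all x, z ∈ 𝒳, the no-side-information distance d(x,z) = min over s₁, s₂ ∈ 𝒮 of |x + s₁ − z − s₂| equals the Euclidean distance |x − z|. -/

import Mathlib

open Finset

/-- The no-side-information distance `d(x, z) = min_{s₁, s₂ ∈ S} |x + s₁ - (z + s₂)|`
between two channel input symbols when the interference is not known at the encoder. -/
noncomputable def dNSI (S : Finset ℝ) (hS : S.Nonempty) (x z : ℝ) : ℝ :=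
  (S ×ˢ S).inf' (hS.product hS) fun p => |x + p.1 - (z + p.2)|

/-- If the minimum gap between distinct interference symbols is at least twice the
maximum spread of `X`, then for all `x, z ∈ X` the no-side-information distance
`d(x, z)` equals the Euclidean distance `|x - z|`. -/
theorem stmt10 (X S : Finset ℝ) (hS : S.Nonempty)
    (hgap : ∀ s ∈ S, ∀ s' ∈ S, s ≠ s' → ∀ x ∈ X, ∀ x' ∈ X, |s - s'| ≥ 2 * |x - x'|) :
    ∀ x ∈ X, ∀ z ∈ X, dNSI S hS x z = |x - z| := by
  intro x hx z hz
  obtain ⟨s, hs⟩ := hS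
  apply le_antisymm
  · have h := Finset.inf'_le (fun p : ℝ × ℝ => |x + p.1 - (z + p.2)|)
      (Finset.mk_mem_product hs hs)
    rw [show x + s - (z + s) = x - z from by ring] at h
    exact h
  · apply Finset.le_inf'
    rintro ⟨s1, s2⟩ hp
    rw [Finset.mem_product] at hp
    by_cases h : s1 = s2
    · subst h
      have heq : x + s1 - (z + s1) = x - z := by ring
      rw [heq]
    · have hg := hgap s1 hp.1 s2 hp.2 h x hx z hz
      have h1 : |s1 - s2| - |x - z| ≤ |(s1 - s2) + (x - z)| := by
        have h0 := abs_sub_abs_le_abs_sub (s1 - s2) (-(x - z))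
        have e1 : s1 - s2 - -(x - z) = (s1 - s2) + (x - z) := by ring
        rw [e1, abs_neg] at h0
        exact h0
      have h2 : x + s1 - (z + s2) = (s1 - s2) + (x - z) := by ring
      rw [h2]
      linarith [abs_nonneg (x - z)]
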